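/- Standard farthest-first traversal (Gonzalez) gives a 2-approximation for k-center: if C_{k} is constructed by starting from an arbitrary point and repeatedly adding the point farthest from the current set of centers (k points in total), then max_{x∈X} d(x, C_k) ≤ 2 · φ_OPT. -/

import Mathlib

/-- distance of a point to a finite set of centers -/
noncomputable def dSet {X : Type*} [MetricSpace X] (x : X) (C : Finset X) : ℝ :=
  sInf ((fun c => dist x c) '' (C : Set X))

/-- k-center cost of a set of centers -/
noncomputable def kCenterCost {X : Type*} [MetricSpace X] [Fintype X] [Nonempty X]
    (C : Finset X) : ℝ :=
  Finset.univ.sup' Finset.univ_nonempty (fun x => dSet x C)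

/-- optimal k-center cost -/
noncomputable def kCenterOpt (X : Type*) [MetricSpace X] [Fintype X] [Nonempty X]
    (k : ℕ) : ℝ :=
  sInf {r | ∃ C : Finset X, C.card = k ∧ r = kCenterCost C}

lemma dSet_eq_inf' {X : Type*} [MetricSpace X] (x : X) (C : Finset X) (h : C.Nonempty) :
    dSet x C = C.inf' h (fun c => dist x c) := by
  rw [dSet, Finset.inf'_eq_csInf_image]

lemma dSet_le_dist {X : Type*} [MetricSpace X] (x : X) {C : Finset X} {c : X} (hc : c ∈ C) :
    dSet x C ≤ dist x c := by
  rw [dSet_eq_inf' x C ⟨c, hc⟩]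
  exact Finset.inf'_le _ hc

lemma dSet_exists {X : Type*} [MetricSpace X] (x : X) {C : Finset X} (h : C.Nonempty) :
    ∃ c ∈ C, dSet x C = dist x c := by
  rw [dSet_eq_inf' x C h]
  exact Finset.exists_mem_eq_inf' h _

lemma dSet_nonneg {X : Type*} [MetricSpace X] (x : X) (C : Finset X) : 0 ≤ dSet x C := by
  apply Real.sInf_nonneg
  rintro y ⟨c, -, rfl⟩
  exact dist_nonneg

lemma dSet_anti {X : Type*} [MetricSpace X] (x : X) {C D : Finset X} (hCD : C ⊆ D)
    (hC : C.Nonempty) : dSet x D ≤ dSet x C := by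
  obtain ⟨c, hc, hce⟩ := dSet_exists x hC
  rw [hce]
  exact dSet_le_dist x (hCD hc)

/-- Gonzalez' farthest-first traversal gives a 2-approximation for `k`-center:
start from an arbitrary point `x0`, and at each step add a point farthest from
the current set of centers; after `k` points, the cost is at most `2 · φ_OPT`. -/
theorem stmt_2 {X : Type*} [MetricSpace X] [Fintype X] [Nonempty X] [DecidableEq X]
    (k : ℕ) (hk : 1 ≤ k) (hkX : k ≤ Fintype.card X)
    (x0 : X) (C : ℕ → Finset X) (hC1 : C 1 = {x0})
    (hstep : ∀ i, 1 ≤ i → i < k → ∃ z : X,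
      (∀ x : X, dSet x (C i) ≤ dSet z (C i)) ∧ C (i + 1) = insert z (C i)) :
    kCenterCost (C k) ≤ 2 * kCenterOpt X k := by
  classical
  -- the optimum is attained
  set T : Set ℝ := {r | ∃ C : Finset X, C.card = k ∧ r = kCenterCost C} with hT
  have hTne : T.Nonempty := by
    obtain ⟨Ck, -, hck⟩ := Finset.exists_subset_card_eq (s := (Finset.univ : Finset X)) (n := k)
      (by simpa using hkX)
    exact ⟨kCenterCost Ck, Ck, hck, rfl⟩
  have hTfin : T.Finite := by
    apply (Set.finite_range (fun C : Finset X => kCenterCost C)).subset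
    rintro r ⟨D, -, rfl⟩
    exact ⟨D, rfl⟩
  have hmem : kCenterOpt X k ∈ T := Set.Nonempty.csInf_mem hTne hTfin
  obtain ⟨Copt, hcard, hropt⟩ := hmem
  have hCopt_ne : Copt.Nonempty := Finset.card_pos.mp (by omega)
  have hrnn : 0 ≤ kCenterCost Copt := by
    obtain ⟨x⟩ := (inferInstance : Nonempty X)
    unfold kCenterCost
    exact le_trans (dSet_nonneg x Copt) (Finset.le_sup' (fun x => dSet x Copt) (Finset.mem_univ x))
  by_cases hg : kCenterCost (C k) ≤ 0
  · linarith
  push_neg at hg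
  -- monotonicity of the chain
  have hmono : ∀ i j : ℕ, 1 ≤ i → i ≤ j → j ≤ k → C i ⊆ C j := by
    intro i j hi hij hjk
    induction j, hij using Nat.le_induction with
    | base => exact subset_rfl
    | succ j hij ih =>
      obtain ⟨z, -, hz⟩ := hstep j (by omega) (by omega)
      refine (ih (by omega)).trans ?_
      rw [hz]
      exact Finset.subset_insert _ _
  have hCne : ∀ j : ℕ, 1 ≤ j → j ≤ k → (C j).Nonempty := by
    intro j hj hjk
    refine ⟨x0, hmono 1 j le_rfl hj hjk ?_⟩
    rw [hC1]; exact Finset.mem_singleton_self x0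
  have hCkne : (C k).Nonempty := hCne k hk le_rfl
  -- sup' over dSet · (C k) bounded by dSet of farthest point at any earlier stage
  have hsuple : ∀ j : ℕ, 1 ≤ j → j ≤ k → ∀ r : ℝ,
      (∀ x : X, dSet x (C j) ≤ r) → kCenterCost (C k) ≤ r := by
    intro j hj hjk r hr
    apply Finset.sup'_le
    intro x _
    exact le_trans (dSet_anti x (hmono j k hj hjk le_rfl) (hCne j hj hjk)) (hr x)
  -- separation: points in C j are pairwise at distance ≥ cost of C k
  have hsep : ∀ j : ℕ, 1 ≤ j → j ≤ k → ∀ p ∈ C j, ∀ q ∈ C j, p ≠ q →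
      kCenterCost (C k) ≤ dist p q := by
    intro j hj
    induction j, hj using Nat.le_induction with
    | base =>
      intro _ p hp q hq hpq
      rw [hC1, Finset.mem_singleton] at hp hq
      exact absurd (hp.trans hq.symm) hpq
    | succ j hj ih =>
      intro hjk p hp q hq hpq
      obtain ⟨z, hzmax, hz⟩ := hstep j (by omega) (by omega)
      rw [hz, Finset.mem_insert] at hp hq
      have key : ∀ a ∈ C j, kCenterCost (C k) ≤ dist z a := by
        intro a ha
        refine hsuple j hj (by omega) (dist z a) ?_
        intro x
        exact le_trans (hzmax x) (dSet_le_dist z ha)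
      rcases hp with rfl | hp
      · rcases hq with rfl | hq
        · exact absurd rfl hpq
        · exact key q hq
      · rcases hq with rfl | hq
        · rw [dist_comm]; exact key p hp
        · exact ih (by omega) p hp q hq hpq
  -- the greedy set really has k elements
  have hcardCk : k ≤ (C k).card := by
    have : ∀ j : ℕ, 1 ≤ j → j ≤ k → j ≤ (C j).card := by
      intro j hj
      induction j, hj using Nat.le_induction with
      | base => intro _; rw [hC1, Finset.card_singleton]
      | succ j hj ih =>
        intro hjk
        obtain ⟨z, hzmax, hz⟩ := hstep j (by omega) (by omega)
        have hznot : z ∉ C j := by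
          intro hzin
          have h0 : dSet z (C j) ≤ 0 := by
            have := dSet_le_dist z hzin
            rwa [dist_self] at this
          have : kCenterCost (C k) ≤ 0 :=
            hsuple j hj (by omega) 0 (fun x => le_trans (hzmax x) h0)
          linarith
        rw [hz, Finset.card_insert_of_notMem hznot]
        have := ih (by omega)
        omega
    exact this k hk le_rfl
  -- the farthest point
  obtain ⟨w, -, hw⟩ := Finset.exists_mem_eq_sup' (Finset.univ_nonempty (α := X))
    (fun x => dSet x (C k))
  have hwC : kCenterCost (C k) = dSet w (C k) := hw
  have hwnot : w ∉ C k := by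
    intro hwin
    have := dSet_le_dist w hwin
    rw [dist_self] at this
    rw [hwC] at hg
    linarith
  -- pigeonhole against the optimal centers
  have hnear : ∀ x : X, ∃ c ∈ Copt, dist x c ≤ kCenterCost Copt := by
    intro x
    obtain ⟨c, hc, hce⟩ := dSet_exists x hCopt_ne
    refine ⟨c, hc, ?_⟩
    rw [← hce]
    unfold kCenterCost
    exact Finset.le_sup' (fun x => dSet x Copt) (Finset.mem_univ x)
  choose f hf1 hf2 using hnear
  have hScard : Copt.card < (insert w (C k)).card := by
    rw [Finset.card_insert_of_notMem hwnot, hcard]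
    omega
  obtain ⟨p, hp, q, hq, hpq, hfeq⟩ :=
    Finset.exists_ne_map_eq_of_card_lt_of_maps_to hScard (fun a _ => hf1 a)
  -- distance between the two collided points is ≥ cost of C k
  have hgpq : kCenterCost (C k) ≤ dist p q := by
    rw [Finset.mem_insert] at hp hq
    have hwd : ∀ a ∈ C k, kCenterCost (C k) ≤ dist w a := by
      intro a ha
      rw [hwC]
      exact dSet_le_dist w ha
    rcases hp with rfl | hp
    · rcases hq with rfl | hq
      · exact absurd rfl hpq
      · exact hwd q hq
    · rcases hq with rfl | hq
      · rw [dist_comm]; exact hwd p hp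
      · exact hsep k hk le_rfl p hp q hq hpq
  have htri : dist p q ≤ 2 * kCenterCost Copt := by
    calc dist p q ≤ dist p (f p) + dist (f p) q := dist_triangle _ _ _
      _ = dist p (f p) + dist q (f q) := by rw [hfeq, dist_comm (f q) q]
      _ ≤ kCenterCost Copt + kCenterCost Copt := add_le_add (hf2 p) (hf2 q)
      _ = 2 * kCenterCost Copt := by ring
  rw [hropt]
  linarith
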